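/- Let A and B be positive definite complex n×n matrices, let α, β ∈ [0,1], and let f : (0,∞) → (0,∞) be a continuous function satisfying f(X ∇_t Y) ≤ f(X) !_t f(Y) for all positive definite X, Y and all t ∈ [0,1]. Then f(A ∇_α B) ≤ f((A ∇_α B) ∇_β A) !_α f((A ∇_α B) ∇_β B) ≤ f(A) !_α f(B) in the Loewner order. -/

import Mathlib

open Matrix ComplexOrder

/-- Real power of a matrix via the continuous functional calculus
(for a positive definite matrix this is the usual functional-calculus power). -/
noncomputable def mpow {n : ℕ} (A : Matrix (Fin n) (Fin n) ℂ) (t : ℝ) :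
    Matrix (Fin n) (Fin n) ℂ :=
  cfc (fun x : ℝ => x ^ t) A

/-- The weighted geometric mean `A ♯ₜ B = A^{1/2} (A^{-1/2} B A^{-1/2})^t A^{1/2}`. -/
noncomputable def gm {n : ℕ} (t : ℝ) (A B : Matrix (Fin n) (Fin n) ℂ) :
    Matrix (Fin n) (Fin n) ℂ :=
  mpow A (1/2) * mpow (mpow A (-(1/2)) * B * mpow A (-(1/2))) t * mpow A (1/2)

/-- The weighted arithmetic mean `A ∇ₜ B = (1-t)A + tB`. -/
noncomputable def am {n : ℕ} (t : ℝ) (A B : Matrix (Fin n) (Fin n) ℂ) :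
    Matrix (Fin n) (Fin n) ℂ :=
  (1 - t) • A + t • B

/-- The weighted harmonic mean `A !ₜ B = ((1-t)A⁻¹ + tB⁻¹)⁻¹`. -/
noncomputable def hm {n : ℕ} (t : ℝ) (A B : Matrix (Fin n) (Fin n) ℂ) :
    Matrix (Fin n) (Fin n) ℂ :=
  ((1 - t) • A⁻¹ + t • B⁻¹)⁻¹

/-- The Loewner order: `X ≤ Y` iff `Y - X` is positive semidefinite. -/
noncomputable def loewnerLE {n : ℕ} (X Y : Matrix (Fin n) (Fin n) ℂ) : Prop :=
  (Y - X).PosSemidef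

set_option maxHeartbeats 800000

section Helpers

variable {n : ℕ}

lemma smul_posSemidef {c : ℝ} (hc : 0 ≤ c) {X : Matrix (Fin n) (Fin n) ℂ}
    (hX : X.PosSemidef) : (c • X).PosSemidef := by
  rw [posSemidef_iff_dotProduct_mulVec]
  constructor
  · show (c • X)ᴴ = c • X
    rw [conjTranspose_smul, star_trivial, hX.1.eq]
  · intro x
    rw [RCLike.real_smul_eq_coe_smul (K := ℂ), smul_mulVec, dotProduct_smul,
      smul_eq_mul]
    exact mul_nonneg (Complex.zero_le_real.mpr hc) (hX.dotProduct_mulVec_nonneg x)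

lemma smul_posDef {c : ℝ} (hc : 0 < c) {X : Matrix (Fin n) (Fin n) ℂ}
    (hX : X.PosDef) : (c • X).PosDef := by
  rw [posDef_iff_dotProduct_mulVec]
  constructor
  · show (c • X)ᴴ = c • X
    rw [conjTranspose_smul, star_trivial, hX.1.eq]
  · intro x hx
    rw [RCLike.real_smul_eq_coe_smul (K := ℂ), smul_mulVec, dotProduct_smul,
      smul_eq_mul]
    exact mul_pos (Complex.zero_lt_real.mpr hc) (hX.dotProduct_mulVec_pos hx)

lemma posDef_comb {t : ℝ} (ht : t ∈ Set.Icc (0:ℝ) 1) {X Y : Matrix (Fin n) (Fin n) ℂ}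
    (hX : X.PosDef) (hY : Y.PosDef) : ((1 - t) • X + t • Y).PosDef := by
  obtain ⟨h0, h1⟩ := ht
  rcases eq_or_lt_of_le h0 with rfl | h0'
  · simpa using hX
  rcases eq_or_lt_of_le h1 with rfl | h1'
  · simpa using hY
  exact (smul_posDef (by linarith) hX).add (smul_posDef h0' hY)

lemma posDef_am {t : ℝ} (ht : t ∈ Set.Icc (0:ℝ) 1) {X Y : Matrix (Fin n) (Fin n) ℂ}
    (hX : X.PosDef) (hY : Y.PosDef) : (am t X Y).PosDef :=
  posDef_comb ht hX hY

lemma posDef_conj' {X B : Matrix (Fin n) (Fin n) ℂ} (hX : X.PosDef) (hB : IsUnit B) :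
    (Bᴴ * X * B).PosDef := by
  refine PosDef.of_dotProduct_mulVec_pos (isHermitian_conjTranspose_mul_mul B hX.1) fun x hx => ?_
  have hBx : B *ᵥ x ≠ 0 := by
    intro h
    exact hx ((Matrix.mulVec_injective_iff_isUnit.mpr hB).eq_iff.mp
      (h.trans (Matrix.mulVec_zero B).symm))
  simpa only [star_mulVec, dotProduct_mulVec, vecMul_vecMul] using hX.dotProduct_mulVec_pos hBx

lemma posDef_conj {X B : Matrix (Fin n) (Fin n) ℂ} (hX : X.PosDef) (hB : IsUnit B) :
    (B * X * Bᴴ).PosDef := by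
  have hBH : IsUnit (Bᴴ) := by
    rw [← Matrix.star_eq_conjTranspose]
    exact hB.star
  simpa only [conjTranspose_conjTranspose] using posDef_conj' hX hBH

lemma cfc_posDef {A : Matrix (Fin n) (Fin n) ℂ} (hA : A.PosDef) {f : ℝ → ℝ}
    (hf : ∀ x ∈ Set.Ioi (0:ℝ), 0 < f x) : (cfc f A).PosDef := by
  rw [hA.1.cfc_eq f]
  unfold Matrix.IsHermitian.cfc
  have hU : IsUnit (hA.1.eigenvectorUnitary : Matrix (Fin n) (Fin n) ℂ) :=
    ⟨Unitary.toUnits hA.1.eigenvectorUnitary, rfl⟩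
  rw [Unitary.conjStarAlgAut_apply, Matrix.star_eq_conjTranspose]
  apply posDef_conj _ hU
  refine Matrix.posDef_diagonal_iff.mpr fun i => ?_
  have : (0:ℝ) < f (hA.1.eigenvalues i) := hf _ (Set.mem_Ioi.mpr (hA.eigenvalues_pos i))
  exact RCLike.ofReal_pos.mpr this

lemma comm_of_inv {S M : Matrix (Fin n) (Fin n) ℂ} (hu : IsUnit M.det)
    (h : S * M⁻¹ = M⁻¹ * S) : S * M = M * S := by
  calc S * M = M * M⁻¹ * (S * M) := by rw [Matrix.mul_nonsing_inv _ hu, one_mul]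
    _ = M * (M⁻¹ * S) * M := by noncomm_ring
    _ = M * (S * M⁻¹) * M := by rw [← h]
    _ = M * S * (M⁻¹ * M) := by noncomm_ring
    _ = M * S := by rw [Matrix.nonsing_inv_mul _ hu, mul_one]

/-- If `C` is positive definite and `C ≤ 1`, then `1 ≤ C⁻¹`. -/
lemma matrix_one_le_inv_of_le_one {C : Matrix (Fin n) (Fin n) ℂ} (hC : C.PosDef)
    (h : (1 - C).PosSemidef) : (C⁻¹ - 1).PosSemidef := by
  have hu : IsUnit C.det := (Matrix.isUnit_iff_isUnit_det _).mp hC.isUnit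
  obtain ⟨S, hSpsd, hSS⟩ : ∃ S : Matrix (Fin n) (Fin n) ℂ, S.PosSemidef ∧ S * S = C⁻¹ :=
    by open scoped MatrixOrder in exact ⟨CFC.sqrt C⁻¹, (CFC.sqrt_nonneg _).posSemidef, CFC.sqrt_mul_sqrt_self _ hC.inv.posSemidef.nonneg⟩
  have hSherm : Sᴴ = S := hSpsd.1
  have h1 : S * C⁻¹ = C⁻¹ * S := by rw [← hSS, ← mul_assoc]
  have h2 : S * C = C * S := comm_of_inv hu h1
  have hSCS : S * C * S = 1 := by
    rw [h2, mul_assoc, hSS, Matrix.mul_nonsing_inv _ hu]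
  have key : S * (1 - C) * S = C⁻¹ - 1 := by
    rw [mul_sub, mul_one, sub_mul, hSS, hSCS]
  have hP := h.mul_mul_conjTranspose_same S
  rw [hSherm, key] at hP
  exact hP

/-- Inverse is antitone with respect to the Loewner order on positive definite matrices. -/
lemma inv_antitone {X Y : Matrix (Fin n) (Fin n) ℂ} (hX : X.PosDef) (hY : Y.PosDef)
    (h : (Y - X).PosSemidef) : (X⁻¹ - Y⁻¹).PosSemidef := by
  have huY : IsUnit Y.det := (Matrix.isUnit_iff_isUnit_det _).mp hY.isUnit
  obtain ⟨T, hTpsd, hTT⟩ : ∃ T : Matrix (Fin n) (Fin n) ℂ, T.PosSemidef ∧ T * T = Y⁻¹ :=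
    by open scoped MatrixOrder in exact ⟨CFC.sqrt Y⁻¹, (CFC.sqrt_nonneg _).posSemidef, CFC.sqrt_mul_sqrt_self _ hY.inv.posSemidef.nonneg⟩
  have hTherm : Tᴴ = T := hTpsd.1
  have hTu : IsUnit T := by
    rw [Matrix.isUnit_iff_isUnit_det]
    have hdet : T.det * T.det = (Y⁻¹).det := by rw [← Matrix.det_mul, hTT]
    have hne : (Y⁻¹).det ≠ 0 := hY.inv.det_pos.ne'
    refine isUnit_iff_ne_zero.mpr fun h0 => hne ?_
    rw [← hdet, h0, mul_zero]
  have huT : IsUnit T.det := (Matrix.isUnit_iff_isUnit_det _).mp hTu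
  have h1 : T * Y⁻¹ = Y⁻¹ * T := by rw [← hTT, ← mul_assoc]
  have h2 : T * Y = Y * T := comm_of_inv huY h1
  have hTYT : T * Y * T = 1 := by
    rw [h2, mul_assoc, hTT, Matrix.mul_nonsing_inv _ huY]
  -- C := T * X * T is positive definite and ≤ 1
  have hCpd : (T * X * T).PosDef := by
    have := posDef_conj hX hTu
    rwa [hTherm] at this
  have hle : (1 - T * X * T).PosSemidef := by
    have hP := h.mul_mul_conjTranspose_same T
    rw [hTherm] at hP
    have e : T * (Y - X) * T = 1 - T * X * T := by
      rw [mul_sub, sub_mul, hTYT]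
    rwa [e] at hP
  have hmain := matrix_one_le_inv_of_le_one hCpd hle
  -- transport back
  have hP := hmain.mul_mul_conjTranspose_same T
  rw [hTherm] at hP
  have hTinv : T * T⁻¹ = 1 := Matrix.mul_nonsing_inv _ huT
  have hTinv' : T⁻¹ * T = 1 := Matrix.nonsing_inv_mul _ huT
  have e : T * ((T * X * T)⁻¹ - 1) * T = X⁻¹ - Y⁻¹ := by
    rw [Matrix.mul_inv_rev, Matrix.mul_inv_rev]
    rw [mul_sub, sub_mul, mul_one, hTT]
    congr 1
    rw [← mul_assoc T T⁻¹, hTinv, one_mul, mul_assoc, hTinv', mul_one]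
  rwa [e] at hP

lemma hm_posDef {t : ℝ} (ht : t ∈ Set.Icc (0:ℝ) 1) {X Y : Matrix (Fin n) (Fin n) ℂ}
    (hX : X.PosDef) (hY : Y.PosDef) : (hm t X Y).PosDef :=
  (posDef_comb ht hX.inv hY.inv).inv

lemma hm_mono {t : ℝ} (ht : t ∈ Set.Icc (0:ℝ) 1)
    {X₁ X₂ Y₁ Y₂ : Matrix (Fin n) (Fin n) ℂ}
    (hX₁ : X₁.PosDef) (hX₂ : X₂.PosDef) (hY₁ : Y₁.PosDef) (hY₂ : Y₂.PosDef)
    (h₁ : (Y₁ - X₁).PosSemidef) (h₂ : (Y₂ - X₂).PosSemidef) :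
    (hm t Y₁ Y₂ - hm t X₁ X₂).PosSemidef := by
  have k₁ := inv_antitone hX₁ hY₁ h₁
  have k₂ := inv_antitone hX₂ hY₂ h₂
  have hAX : ((1 - t) • X₁⁻¹ + t • X₂⁻¹).PosDef := posDef_comb ht hX₁.inv hX₂.inv
  have hAY : ((1 - t) • Y₁⁻¹ + t • Y₂⁻¹).PosDef := posDef_comb ht hY₁.inv hY₂.inv
  have hdiff : (((1 - t) • X₁⁻¹ + t • X₂⁻¹) - ((1 - t) • Y₁⁻¹ + t • Y₂⁻¹)).PosSemidef := by
    have hsum := (smul_posSemidef (c := 1 - t) (by linarith [ht.2]) k₁).add (smul_posSemidef (c := t) ht.1 k₂)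
    have e : (1 - t) • (X₁⁻¹ - Y₁⁻¹) + t • (X₂⁻¹ - Y₂⁻¹)
        = ((1 - t) • X₁⁻¹ + t • X₂⁻¹) - ((1 - t) • Y₁⁻¹ + t • Y₂⁻¹) := by module
    rwa [e] at hsum
  exact inv_antitone hAY hAX hdiff

lemma hm_hm {C D : Matrix (Fin n) (Fin n) ℂ} (hC : C.PosDef) (hD : D.PosDef)
    {s r : ℝ} (a : ℝ) (hs : s ∈ Set.Icc (0:ℝ) 1) (hr : r ∈ Set.Icc (0:ℝ) 1) :
    hm a (hm s C D) (hm r C D) = hm ((1-a)*s + a*r) C D := by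
  have hP : ((1 - s) • C⁻¹ + s • D⁻¹).PosDef := posDef_comb hs hC.inv hD.inv
  have hQ : ((1 - r) • C⁻¹ + r • D⁻¹).PosDef := posDef_comb hr hC.inv hD.inv
  simp only [hm]
  rw [Matrix.nonsing_inv_nonsing_inv _ ((Matrix.isUnit_iff_isUnit_det _).mp hP.isUnit),
      Matrix.nonsing_inv_nonsing_inv _ ((Matrix.isUnit_iff_isUnit_det _).mp hQ.isUnit)]
  congr 1
  module

end Helpers

/-- Harmonic-mean refinement:
`f(A ∇_α B) ≤ f((A ∇_α B) ∇_β A) !_α f((A ∇_α B) ∇_β B) ≤ f(A) !_α f(B)`. -/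
theorem stmt4 {n : ℕ} (A B : Matrix (Fin n) (Fin n) ℂ) (hA : A.PosDef) (hB : B.PosDef)
    (α β : ℝ) (hα : α ∈ Set.Icc (0 : ℝ) 1) (hβ : β ∈ Set.Icc (0 : ℝ) 1)
    (f : ℝ → ℝ) (hf_cont : ContinuousOn f (Set.Ioi 0))
    (hf_pos : ∀ x ∈ Set.Ioi (0 : ℝ), 0 < f x)
    (hf : ∀ X Y : Matrix (Fin n) (Fin n) ℂ, X.PosDef → Y.PosDef →
      ∀ t ∈ Set.Icc (0 : ℝ) 1, loewnerLE (cfc f (am t X Y)) (hm t (cfc f X) (cfc f Y))) :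
    loewnerLE (cfc f (am α A B))
      (hm α (cfc f (am β (am α A B) A)) (cfc f (am β (am α A B) B))) ∧
    loewnerLE (hm α (cfc f (am β (am α A B) A)) (cfc f (am β (am α A B) B)))
      (hm α (cfc f A) (cfc f B)) := by
  obtain ⟨hα0, hα1⟩ := hα
  obtain ⟨hβ0, hβ1⟩ := hβ
  have hM : (am α A B).PosDef := posDef_am ⟨hα0, hα1⟩ hA hB
  have hMA : (am β (am α A B) A).PosDef := posDef_am ⟨hβ0, hβ1⟩ hM hA
  have hMB : (am β (am α A B) B).PosDef := posDef_am ⟨hβ0, hβ1⟩ hM hB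
  constructor
  · have h := hf _ _ hMA hMB α ⟨hα0, hα1⟩
    have e1 : am α (am β (am α A B) A) (am β (am α A B) B) = am α A B := by
      simp only [am]; module
    rwa [e1] at h
  · have hs : (1-β)*α ∈ Set.Icc (0:ℝ) 1 := ⟨by nlinarith, by nlinarith⟩
    have hr : (1-β)*α + β ∈ Set.Icc (0:ℝ) 1 := ⟨by nlinarith, by nlinarith⟩
    have h1 := hf A B hA hB ((1-β)*α) hs
    have h2 := hf A B hA hB ((1-β)*α + β) hr
    have e2 : am ((1-β)*α) A B = am β (am α A B) A := by simp only [am]; module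
    have e3 : am ((1-β)*α + β) A B = am β (am α A B) B := by simp only [am]; module
    rw [e2] at h1
    rw [e3] at h2
    have hfA : (cfc f A).PosDef := cfc_posDef hA hf_pos
    have hfB : (cfc f B).PosDef := cfc_posDef hB hf_pos
    have hfMA : (cfc f (am β (am α A B) A)).PosDef := cfc_posDef hMA hf_pos
    have hfMB : (cfc f (am β (am α A B) B)).PosDef := cfc_posDef hMB hf_pos
    have hhms : (hm ((1-β)*α) (cfc f A) (cfc f B)).PosDef := hm_posDef hs hfA hfB
    have hhmr : (hm ((1-β)*α + β) (cfc f A) (cfc f B)).PosDef := hm_posDef hr hfA hfB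
    have mono := hm_mono ⟨hα0, hα1⟩ hfMA hfMB hhms hhmr h1 h2
    have e4 : hm α (hm ((1-β)*α) (cfc f A) (cfc f B)) (hm ((1-β)*α + β) (cfc f A) (cfc f B))
        = hm α (cfc f A) (cfc f B) := by
      rw [hm_hm hfA hfB α hs hr]
      congr 1
      ring
    rw [e4] at mono
    exact mono
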